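/- Let f : [0,L] → ℝ be continuous and l > 0. Then there exists a unique twice continuously differentiable function ε on [0,L] satisfying ε − l² ε'' = f on [0,L] together with the boundary conditions ε'(0) = ε(0)/l and ε'(L) = −ε(L)/l, namely ε(s) = ∫₀ᴸ (1/(2l)) exp(−|s−ξ|/l) f(ξ) dξ. -/

import Mathlib

open MeasureTheory intervalIntegral Set

noncomputable def Aint (l : ℝ) (f : ℝ → ℝ) (s : ℝ) : ℝ :=
  ∫ ξ in (0:ℝ)..s, Real.exp (ξ / l) * f ξ

noncomputable def Bint (L l : ℝ) (f : ℝ → ℝ) (s : ℝ) : ℝ :=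
  ∫ ξ in s..L, Real.exp (-ξ / l) * f ξ

noncomputable def Gfun (L l : ℝ) (f : ℝ → ℝ) (s : ℝ) : ℝ :=
  (Real.exp (-s / l) * Aint l f s + Real.exp (s / l) * Bint L l f s) / (2 * l)

noncomputable def Gfun1 (L l : ℝ) (f : ℝ → ℝ) (s : ℝ) : ℝ :=
  (Real.exp (s / l) * Bint L l f s - Real.exp (-s / l) * Aint l f s) / (2 * l ^ 2)

section helpers

variable {L : ℝ} {f : ℝ → ℝ}

lemma hAderiv (l : ℝ) (hf : ContinuousOn f (Set.Icc 0 L)) {s : ℝ} (hs : s ∈ Set.Icc 0 L) :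
    HasDerivWithinAt (Aint l f) (Real.exp (s / l) * f s) (Set.Icc 0 L) s := by
  haveI : Fact (s ∈ Set.Icc (0:ℝ) L) := ⟨hs⟩
  have hcont : ContinuousOn (fun ξ => Real.exp (ξ / l) * f ξ) (Set.Icc 0 L) :=
    (Real.continuous_exp.comp (continuous_id.div_const l)).continuousOn.mul hf
  apply intervalIntegral.integral_hasDerivWithinAt_right
    (t := Set.Icc (0:ℝ) L)
  · apply ContinuousOn.intervalIntegrable
    apply hcont.mono
    rw [Set.uIcc_of_le hs.1]
    exact Set.Icc_subset_Icc_right hs.2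
  · exact ⟨Set.Icc 0 L, self_mem_nhdsWithin,
      hcont.aestronglyMeasurable measurableSet_Icc⟩
  · exact hcont s hs

lemma hBderiv (l : ℝ) (hf : ContinuousOn f (Set.Icc 0 L)) {s : ℝ} (hs : s ∈ Set.Icc 0 L) :
    HasDerivWithinAt (Bint L l f) (-(Real.exp (-s / l) * f s)) (Set.Icc 0 L) s := by
  haveI : Fact (s ∈ Set.Icc (0:ℝ) L) := ⟨hs⟩
  have hcont : ContinuousOn (fun ξ => Real.exp (-ξ / l) * f ξ) (Set.Icc 0 L) :=
    (Real.continuous_exp.comp (continuous_id.neg.div_const l)).continuousOn.mul hf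
  apply intervalIntegral.integral_hasDerivWithinAt_left
    (t := Set.Icc (0:ℝ) L)
  · apply ContinuousOn.intervalIntegrable
    apply hcont.mono
    rw [Set.uIcc_of_le hs.2]
    exact Set.Icc_subset_Icc_left hs.1
  · exact ⟨Set.Icc 0 L, self_mem_nhdsWithin,
      hcont.aestronglyMeasurable measurableSet_Icc⟩
  · exact hcont s hs

end helpers

section helpers2
variable {L : ℝ} {f : ℝ → ℝ} {l : ℝ}

lemma hexpneg (l : ℝ) (s : ℝ) :
    HasDerivAt (fun s : ℝ => Real.exp (-s / l)) (Real.exp (-s / l) * (-1 / l)) s := by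
  simpa using (((hasDerivAt_id s).neg.div_const l).exp)

lemma hexppos (l : ℝ) (s : ℝ) :
    HasDerivAt (fun s : ℝ => Real.exp (s / l)) (Real.exp (s / l) * (1 / l)) s := by
  simpa using (((hasDerivAt_id s).div_const l).exp)

lemma hGderiv (hl : 0 < l) (hf : ContinuousOn f (Set.Icc 0 L)) {s : ℝ}
    (hs : s ∈ Set.Icc 0 L) :
    HasDerivWithinAt (Gfun L l f) (Gfun1 L l f s) (Set.Icc 0 L) s := by
  have h := ((((hexpneg l s).hasDerivWithinAt.mul (hAderiv l hf hs)).add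
    ((hexppos l s).hasDerivWithinAt.mul (hBderiv l hf hs))).div_const (2 * l))
  refine h.congr_deriv ?_; symm
  have hE : Real.exp (-s / l) * Real.exp (s / l) = 1 := by
    rw [← Real.exp_add]; ring_nf; exact Real.exp_zero
  unfold Gfun1
  field_simp
  nlinarith [hE, Real.exp_pos (s / l), Real.exp_pos (-s / l)]

lemma hG1deriv (hl : 0 < l) (hf : ContinuousOn f (Set.Icc 0 L)) {s : ℝ}
    (hs : s ∈ Set.Icc 0 L) :
    HasDerivWithinAt (Gfun1 L l f) ((Gfun L l f s - f s) / l ^ 2) (Set.Icc 0 L) s := by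
  have h := ((((hexppos l s).hasDerivWithinAt.mul (hBderiv l hf hs)).sub
    ((hexpneg l s).hasDerivWithinAt.mul (hAderiv l hf hs))).div_const (2 * l ^ 2))
  refine h.congr_deriv ?_; symm
  have hE : Real.exp (-s / l) * Real.exp (s / l) = 1 := by
    rw [← Real.exp_add]; ring_nf; exact Real.exp_zero
  unfold Gfun
  field_simp
  have hE' : Real.exp (-(s / l)) * Real.exp (s / l) = 1 := by rw [← neg_div]; exact hE
  linear_combination (2 * l * f s) * hE'

end helpers2

section repr
variable {L : ℝ} {f : ℝ → ℝ} {l : ℝ}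

lemma hrepr (hl : 0 < l) (hf : ContinuousOn f (Set.Icc 0 L)) {s : ℝ}
    (hs : s ∈ Set.Icc 0 L) :
    (∫ ξ in (0:ℝ)..L, (1 / (2 * l)) * Real.exp (-|s - ξ| / l) * f ξ) = Gfun L l f s := by
  have hkc : ContinuousOn (fun ξ => (1 / (2 * l)) * Real.exp (-|s - ξ| / l) * f ξ)
      (Set.Icc 0 L) := by
    apply ContinuousOn.mul _ hf
    exact (continuous_const.mul (Real.continuous_exp.comp
      (((continuous_const.sub continuous_id).abs.neg).div_const l))).continuousOn
  have hsub1 : Set.uIcc (0:ℝ) s ⊆ Set.Icc 0 L := by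
    rw [Set.uIcc_of_le hs.1]; exact Set.Icc_subset_Icc_right hs.2
  have hsub2 : Set.uIcc s L ⊆ Set.Icc 0 L := by
    rw [Set.uIcc_of_le hs.2]; exact Set.Icc_subset_Icc_left hs.1
  have hk1 : IntervalIntegrable (fun ξ => (1 / (2 * l)) * Real.exp (-|s - ξ| / l) * f ξ)
      volume 0 s := (hkc.mono hsub1).intervalIntegrable
  have hk2 : IntervalIntegrable (fun ξ => (1 / (2 * l)) * Real.exp (-|s - ξ| / l) * f ξ)
      volume s L := (hkc.mono hsub2).intervalIntegrable
  rw [← intervalIntegral.integral_add_adjacent_intervals hk1 hk2]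
  have e1 : (∫ ξ in (0:ℝ)..s, (1 / (2 * l)) * Real.exp (-|s - ξ| / l) * f ξ)
      = (Real.exp (-s / l) / (2 * l)) * Aint l f s := by
    rw [show (Real.exp (-s / l) / (2 * l)) * Aint l f s
        = ∫ ξ in (0:ℝ)..s, (Real.exp (-s / l) / (2 * l)) * (Real.exp (ξ / l) * f ξ) from
      (intervalIntegral.integral_const_mul _ _).symm]
    apply intervalIntegral.integral_congr
    intro ξ hξ
    rw [Set.uIcc_of_le hs.1] at hξ
    have : |s - ξ| = s - ξ := abs_of_nonneg (by linarith [hξ.2])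
    beta_reduce
    rw [this, show -(s - ξ) / l = -s / l + ξ / l by ring, Real.exp_add]
    ring
  have e2 : (∫ ξ in s..L, (1 / (2 * l)) * Real.exp (-|s - ξ| / l) * f ξ)
      = (Real.exp (s / l) / (2 * l)) * Bint L l f s := by
    rw [show (Real.exp (s / l) / (2 * l)) * Bint L l f s
        = ∫ ξ in s..L, (Real.exp (s / l) / (2 * l)) * (Real.exp (-ξ / l) * f ξ) from
      (intervalIntegral.integral_const_mul _ _).symm]
    apply intervalIntegral.integral_congr
    intro ξ hξ
    rw [Set.uIcc_of_le hs.2] at hξ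
    have : |s - ξ| = ξ - s := by
      rw [abs_sub_comm]; exact abs_of_nonneg (by linarith [hξ.1])
    beta_reduce
    rw [this, show -(ξ - s) / l = s / l + -ξ / l by ring, Real.exp_add]
    ring
  rw [e1, e2]
  unfold Gfun
  ring

end repr

section smooth
variable {L : ℝ} {f : ℝ → ℝ} {l : ℝ}

lemma GderivWithin (hL : 0 < L) (hl : 0 < l) (hf : ContinuousOn f (Set.Icc 0 L))
    {s : ℝ} (hs : s ∈ Set.Icc 0 L) :
    derivWithin (Gfun L l f) (Set.Icc 0 L) s = Gfun1 L l f s :=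
  (hGderiv hl hf hs).derivWithin (uniqueDiffOn_Icc hL s hs)

lemma G1derivWithin (hL : 0 < L) (hl : 0 < l) (hf : ContinuousOn f (Set.Icc 0 L))
    {s : ℝ} (hs : s ∈ Set.Icc 0 L) :
    derivWithin (Gfun1 L l f) (Set.Icc 0 L) s = (Gfun L l f s - f s) / l ^ 2 :=
  (hG1deriv hl hf hs).derivWithin (uniqueDiffOn_Icc hL s hs)

lemma Gsmooth (hL : 0 < L) (hl : 0 < l) (hf : ContinuousOn f (Set.Icc 0 L)) :
    ContDiffOn ℝ 2 (Gfun L l f) (Set.Icc 0 L) := by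
  have U : UniqueDiffOn ℝ (Set.Icc (0:ℝ) L) := uniqueDiffOn_Icc hL
  have hGc : ContinuousOn (Gfun L l f) (Set.Icc 0 L) :=
    fun s hs => (hGderiv hl hf hs).continuousWithinAt
  have hG1C1 : ContDiffOn ℝ 1 (Gfun1 L l f) (Set.Icc 0 L) := by
    have := (contDiffOn_succ_iff_derivWithin (n := 0) U (f := Gfun1 L l f)).2
      ⟨fun s hs => (hG1deriv hl hf hs).differentiableWithinAt, by simp, by
        rw [contDiffOn_zero]
        apply ContinuousOn.congr (f := fun s => (Gfun L l f s - f s) / l ^ 2)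
        · exact ((hGc.sub hf).div_const _)
        · intro s hs; exact G1derivWithin hL hl hf hs⟩
    simpa using this
  have h2 := (contDiffOn_succ_iff_derivWithin (n := 1) U (f := Gfun L l f)).2
    ⟨fun s hs => (hGderiv hl hf hs).differentiableWithinAt, by simp, by
      apply hG1C1.congr
      intro s hs; exact GderivWithin hL hl hf hs⟩
  exact h2

end smooth

section bc
variable {L : ℝ} {f : ℝ → ℝ} {l : ℝ}

lemma Gbc0 (hl : 0 < l) : Gfun1 L l f 0 = Gfun L l f 0 / l := by
  unfold Gfun1 Gfun Aint
  rw [intervalIntegral.integral_same]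
  field_simp
  ring

lemma GbcL (hl : 0 < l) : Gfun1 L l f L = -(Gfun L l f L) / l := by
  unfold Gfun1 Gfun Bint
  rw [intervalIntegral.integral_same]
  field_simp
  ring

end bc

section main
variable {L : ℝ} {f : ℝ → ℝ} {l : ℝ}

lemma part1 (hL : 0 < L) (hl : 0 < l) (hf : ContinuousOn f (Set.Icc 0 L))
    (ε : ℝ → ℝ)
    (hε : ∀ s : ℝ, ε s = ∫ ξ in (0:ℝ)..L, (1 / (2 * l)) * Real.exp (-|s - ξ| / l) * f ξ) :
    ContDiffOn ℝ 2 ε (Set.Icc 0 L) ∧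
      (∀ s ∈ Set.Icc (0:ℝ) L,
        ε s - l ^ 2 * derivWithin (derivWithin ε (Set.Icc 0 L)) (Set.Icc 0 L) s = f s) ∧
      derivWithin ε (Set.Icc 0 L) 0 = ε 0 / l ∧
      derivWithin ε (Set.Icc 0 L) L = -(ε L) / l := by
  have hεG : Set.EqOn ε (Gfun L l f) (Set.Icc 0 L) :=
    fun s hs => (hε s).trans (hrepr hl hf hs)
  have h0mem : (0:ℝ) ∈ Set.Icc (0:ℝ) L := ⟨le_refl _, hL.le⟩
  have hLmem : L ∈ Set.Icc (0:ℝ) L := ⟨hL.le, le_refl _⟩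
  have hd1 : ∀ s ∈ Set.Icc (0:ℝ) L, derivWithin ε (Set.Icc 0 L) s = Gfun1 L l f s := by
    intro s hs
    rw [derivWithin_congr hεG (hεG hs)]
    exact GderivWithin hL hl hf hs
  have hd2 : ∀ s ∈ Set.Icc (0:ℝ) L,
      derivWithin (derivWithin ε (Set.Icc 0 L)) (Set.Icc 0 L) s
        = (Gfun L l f s - f s) / l ^ 2 := by
    intro s hs
    rw [derivWithin_congr (fun x hx => hd1 x hx) (hd1 s hs)]
    exact G1derivWithin hL hl hf hs
  refine ⟨(Gsmooth hL hl hf).congr hεG, ?_, ?_, ?_⟩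
  · intro s hs
    rw [hd2 s hs, hεG hs]
    field_simp
    ring
  · rw [hd1 0 h0mem, hεG h0mem, Gbc0 hl]
  · rw [hd1 L hLmem, hεG hLmem, GbcL hl]

lemma uniq (hL : 0 < L) (hl : 0 < l) (hf : ContinuousOn f (Set.Icc 0 L))
    (ε : ℝ → ℝ) (hC2 : ContDiffOn ℝ 2 ε (Set.Icc 0 L))
    (hode : ∀ s ∈ Set.Icc (0:ℝ) L,
      ε s - l ^ 2 * derivWithin (derivWithin ε (Set.Icc 0 L)) (Set.Icc 0 L) s = f s)
    (hb0 : derivWithin ε (Set.Icc 0 L) 0 = ε 0 / l)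
    (hbL : derivWithin ε (Set.Icc 0 L) L = -(ε L) / l) :
    ∀ s ∈ Set.Icc (0:ℝ) L, ε s = Gfun L l f s := by
  have U : UniqueDiffOn ℝ (Set.Icc (0:ℝ) L) := uniqueDiffOn_Icc hL
  set S := Set.Icc (0:ℝ) L with hSdef
  set δ : ℝ → ℝ := fun s => ε s - Gfun L l f s with hδdef
  set e1 := derivWithin ε S with he1def
  set d1 : ℝ → ℝ := fun s => e1 s - Gfun1 L l f s with hd1def
  have hl2 : (l:ℝ) ^ 2 ≠ 0 := by positivity
  have hεdiff : DifferentiableOn ℝ ε S := hC2.differentiableOn (by norm_num)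
  have hεderiv : ∀ s ∈ S, HasDerivWithinAt ε (e1 s) S s :=
    fun s hs => (hεdiff s hs).hasDerivWithinAt
  have he1C1 : ContDiffOn ℝ 1 e1 S := hC2.derivWithin U (by norm_num)
  have he1diff : DifferentiableOn ℝ e1 S := he1C1.differentiableOn (by norm_num)
  have he1deriv : ∀ s ∈ S, HasDerivWithinAt e1 (derivWithin e1 S s) S s :=
    fun s hs => (he1diff s hs).hasDerivWithinAt
  have he2val : ∀ s ∈ S, derivWithin e1 S s = (ε s - f s) / l ^ 2 := by
    intro s hs
    have h := hode s hs
    field_simp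
    linarith
  have hδ' : ∀ s ∈ S, HasDerivWithinAt δ (d1 s) S s :=
    fun s hs => (hεderiv s hs).sub (hGderiv hl hf hs)
  have hd1' : ∀ s ∈ S, HasDerivWithinAt d1 (δ s / l ^ 2) S s := by
    intro s hs
    have h := (he1deriv s hs).sub (hG1deriv hl hf hs)
    rw [he2val s hs] at h
    refine h.congr_deriv ?_; symm
    simp only [hδdef]
    ring
  have hd10 : d1 0 = δ 0 / l := by
    simp only [hd1def, hδdef, ← he1def]
    rw [hb0, Gbc0 hl]
    ring
  have hd1L : d1 L = -δ L / l := by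
    simp only [hd1def, hδdef, ← he1def]
    rw [hbL, GbcL hl]
    ring
  have hδcont : ContinuousOn δ S :=
    (hC2.continuousOn).sub (fun s hs => (hGderiv hl hf hs).continuousWithinAt)
  have hd1cont : ContinuousOn d1 S :=
    (he1C1.continuousOn).sub
      (fun s hs => (hG1deriv hl hf hs).differentiableWithinAt.continuousWithinAt)
  set I : ℝ → ℝ := fun s => δ s ^ 2 + l ^ 2 * d1 s ^ 2 with hIdef
  have hIcont : ContinuousOn I S := (hδcont.pow 2).add (continuousOn_const.mul (hd1cont.pow 2))
  have hIint : IntervalIntegrable I volume 0 L := by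
    apply ContinuousOn.intervalIntegrable
    rwa [Set.uIcc_of_le hL.le]
  set Eng : ℝ → ℝ := fun s => l ^ 2 * (δ s * d1 s) with hEngdef
  have hEng' : ∀ x ∈ Set.Ioo (0:ℝ) L, HasDerivWithinAt Eng (I x) (Set.Ioi x) x := by
    intro x hx
    have hmem : S ∈ nhds x := Icc_mem_nhds hx.1 hx.2
    have hδx : HasDerivAt δ (d1 x) x := (hδ' x (Set.Ioo_subset_Icc_self hx)).hasDerivAt hmem
    have hd1x : HasDerivAt d1 (δ x / l ^ 2) x :=
      (hd1' x (Set.Ioo_subset_Icc_self hx)).hasDerivAt hmem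
    have h := (hδx.mul hd1x).const_mul (l ^ 2)
    apply HasDerivAt.hasDerivWithinAt
    refine h.congr_deriv ?_; symm
    simp only [hIdef]
    field_simp
    ring
  have hEngcont : ContinuousOn Eng S := continuousOn_const.mul (hδcont.mul hd1cont)
  have key : (∫ x in (0:ℝ)..L, I x) = Eng L - Eng 0 :=
    intervalIntegral.integral_eq_sub_of_hasDeriv_right_of_le hL.le hEngcont hEng' hIint
  have hEngval : Eng L - Eng 0 = -(l * (δ L ^ 2 + δ 0 ^ 2)) := by
    simp only [hEngdef]
    rw [hd10, hd1L]
    field_simp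
    ring
  have h1 : 0 ≤ ∫ x in (0:ℝ)..L, I x := by
    apply intervalIntegral.integral_nonneg hL.le
    intro x _
    simp only [hIdef]
    positivity
  have hint0 : (∫ x in (0:ℝ)..L, I x) = 0 := by
    refine le_antisymm ?_ h1
    rw [key, hEngval]
    nlinarith [sq_nonneg (δ L), sq_nonneg (δ 0)]
  have hnn : 0 ≤ᵐ[volume] I := Filter.Eventually.of_forall fun x => by
    simp only [hIdef]; positivity
  have hμ : volume (Function.support I ∩ Set.Ioc 0 L) = 0 := by
    by_contra h
    have hpos := (intervalIntegral.integral_pos_iff_support_of_nonneg_ae hnn hIint).2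
      ⟨hL, (zero_le).lt_of_ne (Ne.symm h)⟩
    rw [hint0] at hpos
    exact lt_irrefl 0 hpos
  intro s0 hs0
  by_contra hne
  have hδne : δ s0 ≠ 0 := sub_ne_zero.2 hne
  have hpos : 0 < δ s0 ^ 2 := by positivity
  have hδ2cont : ContinuousWithinAt (fun x => δ x ^ 2) S s0 := (hδcont s0 hs0).pow 2
  have hev : (fun x => δ x ^ 2) ⁻¹' Set.Ioi 0 ∈ nhdsWithin s0 S :=
    hδ2cont (Ioi_mem_nhds hpos)
  rw [Metric.mem_nhdsWithin_iff] at hev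
  obtain ⟨r, hr, hball⟩ := hev
  have hs01 := hs0.1
  have hs02 := hs0.2
  set u := max (s0 - r / 2) 0 with hudef
  set v := min (s0 + r / 2) L with hvdef
  have huv : u < v := by
    apply lt_min
    · apply max_lt <;> linarith
    · apply max_lt <;> linarith
  have hsub : Set.Ioo u v ⊆ Function.support I ∩ Set.Ioc 0 L := by
    intro x hx
    have hx0 : 0 < x := lt_of_le_of_lt (le_max_right _ _) hx.1
    have hxL : x ≤ L := le_of_lt (lt_of_lt_of_le hx.2 (min_le_right _ _))
    have hxu : s0 - r / 2 ≤ u := le_max_left _ _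
    have hxv : v ≤ s0 + r / 2 := min_le_left _ _
    have hdist : x ∈ Metric.ball s0 r := by
      rw [Metric.mem_ball, Real.dist_eq, abs_lt]
      constructor <;> [linarith [hx.1, hxu]; linarith [hx.2, hxv]]
    have hx2 : 0 < δ x ^ 2 := hball ⟨hdist, hx0.le, hxL⟩
    refine ⟨Function.mem_support.2 (ne_of_gt ?_), hx0, hxL⟩
    simp only [hIdef]
    nlinarith [sq_nonneg (d1 x)]
  have hzero : volume (Set.Ioo u v) = 0 := measure_mono_null hsub hμ
  rw [Real.volume_Ioo] at hzero
  have := ENNReal.ofReal_eq_zero.1 hzero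
  linarith

end main

open MeasureTheory intervalIntegral

theorem exists_unique_solution (L l : ℝ) (hL : 0 < L) (hl : 0 < l)
    (f : ℝ → ℝ) (hf : ContinuousOn f (Set.Icc 0 L)) :
    (∀ ε : ℝ → ℝ,
      (∀ s : ℝ, ε s = ∫ ξ in (0:ℝ)..L, (1 / (2 * l)) * Real.exp (-|s - ξ| / l) * f ξ) →
      ContDiffOn ℝ 2 ε (Set.Icc 0 L) ∧
      (∀ s ∈ Set.Icc (0:ℝ) L,
        ε s - l ^ 2 * derivWithin (derivWithin ε (Set.Icc 0 L)) (Set.Icc 0 L) s = f s) ∧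
      derivWithin ε (Set.Icc 0 L) 0 = ε 0 / l ∧
      derivWithin ε (Set.Icc 0 L) L = -(ε L) / l) ∧
    (∀ ε : ℝ → ℝ,
      ContDiffOn ℝ 2 ε (Set.Icc 0 L) →
      (∀ s ∈ Set.Icc (0:ℝ) L,
        ε s - l ^ 2 * derivWithin (derivWithin ε (Set.Icc 0 L)) (Set.Icc 0 L) s = f s) →
      derivWithin ε (Set.Icc 0 L) 0 = ε 0 / l →
      derivWithin ε (Set.Icc 0 L) L = -(ε L) / l →
      ∀ s ∈ Set.Icc (0:ℝ) L,
        ε s = ∫ ξ in (0:ℝ)..L, (1 / (2 * l)) * Real.exp (-|s - ξ| / l) * f ξ) := by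
  constructor
  · exact fun ε hε => part1 hL hl hf ε hε
  · intro ε hC2 hode hb0 hbL s hs
    rw [hrepr hl hf hs]
    exact uniq hL hl hf ε hC2 hode hb0 hbL s hs
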